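/- If x(t) solves ẋ = f(x) in a Hilbert space X, then the image (χ(t), z(t)) = P(x(t)) under the Poincaré transformation satisfies χ̇ = f_z(χ) − ⟨f_z(χ), χ⟩χ and ż = −⟨f_z(χ), χ⟩z, where f_z(χ) := z f(z⁻¹χ), as long as z(t) > 0. -/

import Mathlib

/-- If `x(t)` solves `ẋ = f(x)` in a Hilbert space `X`, then the image
`(χ(t), z(t)) = P(x(t))` under the Poincaré transformation satisfies
`χ̇ = f_z(χ) − ⟨f_z(χ), χ⟩χ` and `ż = −⟨f_z(χ), χ⟩ z`, where
`f_z(χ) := z • f(z⁻¹ • χ)` (note `z(t) > 0` always holds). -/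
theorem poincare_transformed_vector_field
    (X : Type*) [NormedAddCommGroup X] [InnerProductSpace ℝ X]
    (f : X → X) (x : ℝ → X)
    (hx : ∀ t, HasDerivAt x (f (x t)) t)
    (χ : ℝ → X) (z : ℝ → ℝ)
    (hχ : ∀ t, χ t = (Real.sqrt ((inner ℝ (x t) (x t) : ℝ) + 1))⁻¹ • x t)
    (hz : ∀ t, z t = (Real.sqrt ((inner ℝ (x t) (x t) : ℝ) + 1))⁻¹)
    (fz : ℝ → X → X) (hfz : ∀ w χ', fz w χ' = w • f (w⁻¹ • χ'))
    (t : ℝ) (hzt : 0 < z t) :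
    HasDerivAt χ (fz (z t) (χ t) - (inner ℝ (fz (z t) (χ t)) (χ t) : ℝ) • χ t) t ∧
    HasDerivAt z (-(inner ℝ (fz (z t) (χ t)) (χ t) : ℝ) * z t) t := by
  have hA0 : ∀ s, (0:ℝ) < (inner ℝ (x s) (x s) : ℝ) + 1 := fun s => by
    have := real_inner_self_nonneg (x := x s); linarith
  set r : ℝ := Real.sqrt ((inner ℝ (x t) (x t) : ℝ) + 1) with hr_def
  have hr : 0 < r := Real.sqrt_pos.mpr (hA0 t)
  have hr2 : r ^ 2 = (inner ℝ (x t) (x t) : ℝ) + 1 := Real.sq_sqrt (hA0 t).le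
  have hzr : z t = r⁻¹ := hz t
  -- derivative of inner product + 1
  have hA : HasDerivAt (fun s => (inner ℝ (x s) (x s) : ℝ) + 1)
      ((inner ℝ (x t) (f (x t)) : ℝ) + (inner ℝ (f (x t)) (x t) : ℝ)) t :=
    ((hx t).inner ℝ (hx t)).add_const 1
  have hS : HasDerivAt (fun s => Real.sqrt ((inner ℝ (x s) (x s) : ℝ) + 1))
      (((inner ℝ (x t) (f (x t)) : ℝ) + (inner ℝ (f (x t)) (x t) : ℝ)) / (2 * r)) t :=
    hA.sqrt (hA0 t).ne'
  have hZfun : z = fun s => (Real.sqrt ((inner ℝ (x s) (x s) : ℝ) + 1))⁻¹ := funext hz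
  have hZ : HasDerivAt z
      (-(((inner ℝ (x t) (f (x t)) : ℝ) + (inner ℝ (f (x t)) (x t) : ℝ)) / (2 * r)) / r ^ 2) t := by
    rw [hZfun]; exact hS.inv hr.ne'
  have hXfun : χ = fun s => z s • x s := by
    funext s; rw [hχ s, hz s]
  have hC : HasDerivAt χ
      (z t • f (x t) +
        (-(((inner ℝ (x t) (f (x t)) : ℝ) + (inner ℝ (f (x t)) (x t) : ℝ)) / (2 * r)) / r ^ 2) • x t) t := by
    rw [hXfun]; exact hZ.smul (hx t)
  -- identify fz value
  have hxt : (z t)⁻¹ • χ t = x t := by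
    rw [hχ t, hzr, inv_inv, smul_smul, mul_inv_cancel₀ hr.ne', one_smul]
  have hfzval : fz (z t) (χ t) = r⁻¹ • f (x t) := by
    rw [hfz, hxt, hzr]
  have hinner : (inner ℝ (fz (z t) (χ t)) (χ t) : ℝ)
      = r⁻¹ * (r⁻¹ * (inner ℝ (f (x t)) (x t) : ℝ)) := by
    rw [hfzval, hχ t, real_inner_smul_left, real_inner_smul_right]
  have hcomm : (inner ℝ (x t) (f (x t)) : ℝ) = (inner ℝ (f (x t)) (x t) : ℝ) :=
    real_inner_comm _ _
  constructor
  · convert hC using 1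
    rw [hinner, hfzval, hχ t, hzr, hcomm, smul_smul]
    rw [sub_eq_add_neg, ← neg_smul]
    congr 1
    rw [← hr_def]
    field_simp
    ring
  · convert hZ using 1
    rw [hinner, hzr, hcomm]
    field_simp
    ring
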